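/- Fix L > 0, n ∈ ℕ, s ∈ [0,T], and a set Γ ⊆ ℝ. Define for y ∈ ℝ: F_n(y) = 2^n ∫_{y - 2^{-n}}^{y} L · 1{v : v + η ∈ Γ for all η ∈ [0, 2^{-n}]} dv. Then F_n(y) ≤ F_{n+1}(y) for every y ∈ ℝ. -/

import Mathlib

open Filter Set MeasureTheory intervalIntegral

/-- A `δ`-separated subset of `ℝ` is countable. -/
lemma countable_of_separated (δ : ℝ) (hδ : 0 < δ) (E : Set ℝ)
    (h : ∀ p ∈ E, ∀ q ∈ E, p < q → δ ≤ q - p) : E.Countable := by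
  have key : ∀ p : ℝ, ∃ q : ℚ, p ∈ E → (q : ℝ) ∈ Ioo (p - δ) p := by
    intro p
    rcases exists_rat_btwn (show p - δ < p by linarith) with ⟨q, hq⟩
    exact ⟨q, fun _ => hq⟩
  choose f hf using key
  have hinj : InjOn f E := by
    intro p hp p' hp' hfe
    by_contra hne
    rcases lt_or_gt_of_ne hne with hlt | hlt
    · have h1 := hf p hp; have h2 := hf p' hp'
      have hsep := h p hp p' hp' hlt
      have : (f p : ℝ) < (f p' : ℝ) := by
        simp only [mem_Ioo] at h1 h2; linarith
      rw [hfe] at this; exact lt_irrefl _ this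
    · have h1 := hf p hp; have h2 := hf p' hp'
      have hsep := h p' hp' p hp hlt
      have : (f p' : ℝ) < (f p : ℝ) := by
        simp only [mem_Ioo] at h1 h2; linarith
      rw [hfe] at this; exact lt_irrefl _ this
  exact (mapsTo_univ f E).countable_of_injOn hinj countable_univ

/-- A union of closed intervals of fixed positive length is measurable. -/
lemma measurableSet_iUnion_Icc (δ : ℝ) (hδ : 0 < δ) (S : Set ℝ) :
    MeasurableSet (⋃ x ∈ S, Icc (x - δ) x) := by
  set U := ⋃ x ∈ S, Icc (x - δ) x with hU
  set V := ⋃ x ∈ S, Ioo (x - δ) x with hV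
  have hVopen : IsOpen V := isOpen_biUnion fun x _ => isOpen_Ioo
  have hVU : V ⊆ U := iUnion₂_mono fun x _ => Ioo_subset_Icc_self
  have hsub : U \ V ⊆ (S \ V) ∪ ((fun x => x - δ) '' S \ V) := by
    rintro p ⟨hpU, hpV⟩
    simp only [hU, mem_iUnion, mem_Icc, exists_prop] at hpU
    obtain ⟨x, hxS, hx1, hx2⟩ := hpU
    rcases eq_or_lt_of_le hx1 with h1 | h1
    · exact Or.inr ⟨⟨x, hxS, h1⟩, hpV⟩
    rcases eq_or_lt_of_le hx2 with h2 | h2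
    · exact Or.inl ⟨h2 ▸ hxS, hpV⟩
    · exact absurd (show p ∈ V from mem_iUnion₂.mpr ⟨x, hxS, mem_Ioo.mpr ⟨h1, h2⟩⟩) hpV
  have hcount1 : (S \ V).Countable := by
    apply countable_of_separated δ hδ
    intro p hp q hq hpq
    by_contra hlt
    push_neg at hlt
    exact hp.2 (mem_biUnion hq.1 (mem_Ioo.mpr ⟨by linarith, hpq⟩))
  have hcount2 : ((fun x => x - δ) '' S \ V).Countable := by
    apply countable_of_separated δ hδ
    intro p hp q hq hpq
    by_contra hlt
    push_neg at hlt
    obtain ⟨x, hxS, hx⟩ := hp.1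
    have hx' : x - δ = p := hx
    -- p = x - δ ; then q ∈ (x - δ, x)
    exact hq.2 (mem_iUnion₂.mpr ⟨x, hxS, mem_Ioo.mpr ⟨by linarith, by linarith⟩⟩)
  have hdiff : (U \ V).Countable := (hcount1.union hcount2).mono hsub
  have : U = V ∪ (U \ V) := by
    rw [union_diff_cancel' (le_refl V) hVU]
  rw [this]
  exact hVopen.measurableSet.union hdiff.measurableSet

/-- The "δ-robust interior" set is measurable for any set `Γ`. -/
lemma measurableSet_robust (δ : ℝ) (hδ : 0 < δ) (Γ : Set ℝ) :
    MeasurableSet {v : ℝ | ∀ η ∈ Icc (0 : ℝ) δ, v + η ∈ Γ} := by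
  have heq : {v : ℝ | ∀ η ∈ Icc (0 : ℝ) δ, v + η ∈ Γ}
      = (⋃ x ∈ Γᶜ, Icc (x - δ) x)ᶜ := by
    ext v
    simp only [mem_setOf_eq, mem_compl_iff, mem_iUnion, mem_Icc, exists_prop, not_exists,
      mem_compl_iff, not_and, mem_Icc]
    constructor
    · intro hv x hx h1 h2
      exact absurd (hv (x - v) ⟨by linarith, by linarith⟩) (by simpa using hx)
    · intro hv η ⟨h1, h2⟩
      by_contra hmem
      exact hv (v + η) hmem (by linarith) (by linarith)
  rw [heq]
  exact (measurableSet_iUnion_Icc δ hδ Γᶜ).compl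

lemma indicator_intervalIntegrable {A : Set ℝ} (hA : MeasurableSet A) (L : ℝ) (a b : ℝ) :
    IntervalIntegrable (A.indicator fun _ => L) volume a b := by
  rw [intervalIntegrable_iff]
  exact ((integrableOn_const_iff (C := L)).mpr (Or.inr measure_Ioc_lt_top)).indicator hA

/-- The averaged indicator `F_n(y) = 2^n ∫_{y-2^{-n}}^y L·1{v : v+η ∈ Γ ∀ η ∈ [0,2^{-n}]} dv`
is nondecreasing in `n`. -/
theorem averaged_indicator_monotone
    (L : ℝ) (hL : 0 < L) (Γ : Set ℝ) (hΓ : MeasurableSet Γ) (n : ℕ) (y : ℝ) :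
    (2 : ℝ) ^ n * ∫ v in (y - (2 : ℝ) ^ (-(n : ℤ)))..y,
        Set.indicator {v : ℝ | ∀ η ∈ Set.Icc (0 : ℝ) ((2 : ℝ) ^ (-(n : ℤ))), v + η ∈ Γ}
          (fun _ => L) v
      ≤ (2 : ℝ) ^ (n + 1) * ∫ v in (y - (2 : ℝ) ^ (-((n : ℤ) + 1)))..y,
        Set.indicator {v : ℝ | ∀ η ∈ Set.Icc (0 : ℝ) ((2 : ℝ) ^ (-((n : ℤ) + 1))), v + η ∈ Γ}
          (fun _ => L) v := by
  set δ : ℝ := (2 : ℝ) ^ (-((n : ℤ) + 1)) with hδdef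
  have hδ : 0 < δ := zpow_pos (by norm_num) _
  have h2δ : (2 : ℝ) ^ (-(n : ℤ)) = δ + δ := by
    rw [hδdef, show -(n : ℤ) = (-((n : ℤ) + 1)) + 1 by ring, zpow_add_one₀ (two_ne_zero)]
    ring
  set A : Set ℝ := {v : ℝ | ∀ η ∈ Set.Icc (0 : ℝ) ((2 : ℝ) ^ (-(n : ℤ))), v + η ∈ Γ} with hAdef
  set B : Set ℝ := {v : ℝ | ∀ η ∈ Set.Icc (0 : ℝ) δ, v + η ∈ Γ} with hBdef
  have hA : MeasurableSet A := measurableSet_robust _ (by positivity) Γ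
  have hB : MeasurableSet B := measurableSet_robust _ hδ Γ
  have hAB : A ⊆ B := by
    intro v hv η hη
    exact hv η ⟨hη.1, by rw [h2δ]; linarith [hη.2, hδ.le]⟩
  have hshift : ∀ v, v ∈ A → v + δ ∈ B := by
    intro v hv η hη
    have := hv (δ + η) ⟨by linarith [hη.1, hδ.le], by rw [h2δ]; linarith [hη.2]⟩
    rwa [← add_assoc] at this
  set f : ℝ → ℝ := A.indicator fun _ => L with hfdef
  set g : ℝ → ℝ := B.indicator fun _ => L with hgdef
  have hfint : ∀ a b : ℝ, IntervalIntegrable f volume a b :=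
    fun a b => indicator_intervalIntegrable hA L a b
  have hgint : ∀ a b : ℝ, IntervalIntegrable g volume a b :=
    fun a b => indicator_intervalIntegrable hB L a b
  -- split the integral
  have hsplit : (∫ v in (y - (2 : ℝ) ^ (-(n : ℤ)))..y, f v)
      = (∫ v in (y - δ - δ)..(y - δ), f v) + ∫ v in (y - δ)..y, f v := by
    rw [show y - (2 : ℝ) ^ (-(n : ℤ)) = y - δ - δ by rw [h2δ]; ring]
    exact (integral_add_adjacent_intervals (hfint _ _) (hfint _ _)).symm
  -- translate the left half
  have htrans : (∫ v in (y - δ - δ)..(y - δ), f v)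
      = ∫ v in (y - δ)..y, f (v - δ) := by
    rw [intervalIntegral.integral_comp_sub_right (fun v => f v) δ]
  -- compare the translated left half with g
  have hA' : MeasurableSet ((fun v : ℝ => v - δ) ⁻¹' A) := (measurable_id.sub_const δ) hA
  have hcomp : (fun v => f (v - δ)) = ((fun v : ℝ => v - δ) ⁻¹' A).indicator (fun _ => L) := by
    ext v
    by_cases hv : v - δ ∈ A
    · rw [hfdef, Set.indicator_of_mem hv, Set.indicator_of_mem (by exact hv)]
    · rw [hfdef, Set.indicator_of_notMem hv, Set.indicator_of_notMem (by exact hv)]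
  have hmono1 : (∫ v in (y - δ)..y, f (v - δ)) ≤ ∫ v in (y - δ)..y, g v := by
    apply integral_mono_on (by linarith)
      (hcomp ▸ indicator_intervalIntegrable hA' L (y - δ) y) (hgint _ _)
    intro v _
    by_cases hv : v - δ ∈ A
    · have : v ∈ B := by
        have := hshift _ hv; rwa [sub_add_cancel] at this
      rw [hfdef, hgdef, Set.indicator_of_mem hv, Set.indicator_of_mem this]
    · rw [hfdef, Set.indicator_of_notMem hv]
      exact Set.indicator_nonneg (fun _ _ => hL.le) v
  -- compare the right half with g
  have hmono2 : (∫ v in (y - δ)..y, f v) ≤ ∫ v in (y - δ)..y, g v := by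
    apply integral_mono_on (by linarith) (hfint _ _) (hgint _ _)
    intro v _
    exact Set.indicator_le_indicator_of_subset hAB (fun _ => hL.le) v
  have hpow : (2 : ℝ) ^ (n + 1) = 2 ^ n * 2 := pow_succ 2 n
  have hnonneg : (0 : ℝ) < 2 ^ n := by positivity
  calc (2 : ℝ) ^ n * ∫ v in (y - (2 : ℝ) ^ (-(n : ℤ)))..y, f v
      = 2 ^ n * ((∫ v in (y - δ)..y, f (v - δ)) + ∫ v in (y - δ)..y, f v) := by
        rw [hsplit, htrans]
    _ ≤ 2 ^ n * ((∫ v in (y - δ)..y, g v) + ∫ v in (y - δ)..y, g v) := by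
        apply mul_le_mul_of_nonneg_left (by linarith) hnonneg.le
    _ = 2 ^ (n + 1) * ∫ v in (y - δ)..y, g v := by rw [hpow]; ring
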